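/- Let T = 2^ℓ, let 0 ≤ r < T, and let Seg(r) = (S_1, …, S_m) in order of construction. Then for every 1 ≤ i ≤ m, Σ_{i'=1}^{i} l(S_{i'}) ≤ 4·l(S_i), where l(S) denotes the length of the interval S. -/

import Mathlib

/-- The procedure `FormSegments`, starting at stage `s` with current time `t`, stopping
once `t ≥ T`.  Each produced entry `(s, a, b)` records the stage `s` at which the
interval `[a, b]` was appended. -/
def segAux (T : ℕ) (s t : ℕ) : List (ℕ × ℕ × ℕ) :=
  if h : t < T then
    if 2 ^ (s + 1) ∣ t then
      (s, t, t + 2 ^ s) :: (s, t + 2 ^ s, t + 2 ^ (s + 1)) ::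
        segAux T (s + 1) (t + 2 ^ (s + 1))
    else
      (s, t, t + 2 ^ s) :: segAux T (s + 1) (t + 2 ^ s)
  else []
termination_by T - t
decreasing_by
  · have h1 : 0 < 2 ^ (s + 1) := Nat.pow_pos (by norm_num)
    omega
  · have h1 : 0 < 2 ^ s := Nat.pow_pos (by norm_num)
    omega

/-- `Seg T r` : the sequence of intervals of `Seg(r)` (forgetting the stages). -/
def Seg (T rj : ℕ) : List (ℕ × ℕ) := (segAux T 0 rj).map fun x => (x.2.1, x.2.2)

/-- for `T = 2^ℓ` and `0 ≤ r < T`, writing `Seg(r) = (S_1, …, S_m)` in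
order of construction, for every `i` the total length of the first `i` segments is at
most `4` times the length of the `i`-th segment. -/
lemma segKey (T : ℕ) : ∀ n s t, T ≤ t + n → ∀ i (hi : i < (segAux T s t).length),
    (((segAux T s t).take (i + 1)).map fun x => x.2.2 - x.2.1).sum + 2 ^ (s + 1)
      ≤ 4 * (((segAux T s t).get ⟨i, hi⟩).2.2 - ((segAux T s t).get ⟨i, hi⟩).2.1) := by
  intro n
  induction n with
  | zero =>
    intro s t ht i hi
    have ht' : ¬ t < T := by omega
    rw [segAux, dif_neg ht'] at hi
    simp at hi
  | succ n ih =>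
    intro s t ht i hi
    have hp : 0 < 2 ^ s := Nat.pow_pos (by norm_num)
    have hps : (2:ℕ) ^ (s + 1) = 2 * 2 ^ s := by ring
    have hps2 : (2:ℕ) ^ (s + 2) = 4 * 2 ^ s := by ring
    by_cases h : t < T
    · by_cases hd : 2 ^ (s + 1) ∣ t
      · have heq : segAux T s t =
            (s, t, t + 2 ^ s) :: (s, t + 2 ^ s, t + 2 ^ (s + 1)) ::
              segAux T (s + 1) (t + 2 ^ (s + 1)) := by
          rw [segAux]; simp [h, hd]
        match i with
        | 0 => simp [heq]; omega
        | 1 => simp [heq]; omega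
        | (k + 2) =>
          have hi' := hi
          rw [heq] at hi'
          simp only [List.length_cons] at hi'
          have hik : k < (segAux T (s + 1) (t + 2 ^ (s + 1))).length := by omega
          have := ih (s + 1) (t + 2 ^ (s + 1)) (by omega) k hik
          simp only [List.get_eq_getElem, heq, List.getElem_cons_succ,
            List.take_succ_cons, List.map_cons, List.sum_cons] at this ⊢
          omega
      · have heq : segAux T s t =
            (s, t, t + 2 ^ s) :: segAux T (s + 1) (t + 2 ^ s) := by
          rw [segAux]; simp [h, hd]
        match i with
        | 0 => simp [heq]; omega
        | (k + 1) =>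
          have hi' := hi
          rw [heq] at hi'
          simp only [List.length_cons] at hi'
          have hik : k < (segAux T (s + 1) (t + 2 ^ s)).length := by omega
          have := ih (s + 1) (t + 2 ^ s) (by omega) k hik
          simp only [List.get_eq_getElem, heq, List.getElem_cons_succ,
            List.take_succ_cons, List.map_cons, List.sum_cons] at this ⊢
          omega
    · rw [segAux, dif_neg h] at hi
      simp at hi

theorem stmt6 (ℓ r : ℕ) (hr : r < 2 ^ ℓ) (i : ℕ)
    (hi : i < (segAux (2 ^ ℓ) 0 r).length) :
    (((segAux (2 ^ ℓ) 0 r).take (i + 1)).map fun x => x.2.2 - x.2.1).sum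
      ≤ 4 * (((segAux (2 ^ ℓ) 0 r).get ⟨i, hi⟩).2.2
              - ((segAux (2 ^ ℓ) 0 r).get ⟨i, hi⟩).2.1) := by
  have := segKey (2 ^ ℓ) (2 ^ ℓ) 0 r (by omega) i hi
  omega
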